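/- (Overwhelming majority implies no surprise.) In the two-candidate P_2-voter model, if the winning margin is so large that (p_{22}/p_{21})·((1/2 − ε)/(1/2 + ε)) < 1, and the voter's estimates are regular, i.e., p̂_{22} ≥ p̂_{21}, then there exists N such that for all n ≥ N, P(Z > 0) ≤ exp(−2·(p̂_{22}·p̂_{21}/(p̂_{22} + p̂_{21}))²·√n); hence such a P_2 voter is not surprised with high probability. -/

import Mathlib

open MeasureTheory ProbabilityTheory


/-- Expectation of a function of a three-valued random variable. -/
lemma three_point_integral {Ω : Type*} [MeasurableSpace Ω] (μ : Measure Ω)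
    [IsProbabilityMeasure μ]
    (X : Ω → ℝ) (hX : Measurable X) (x1 x2 : ℝ) (hx1 : x1 ≠ 0) (hx2 : x2 ≠ 0)
    (h12 : x1 ≠ x2) (a b : ℝ) (ha : 0 ≤ a) (hb : 0 ≤ b) (hab : a + b ≤ 1)
    (hA : μ {ω | X ω = x1} = ENNReal.ofReal a)
    (hB : μ {ω | X ω = x2} = ENNReal.ofReal b)
    (hC : μ {ω | X ω = 0} = ENNReal.ofReal (1 - a - b))
    (f : ℝ → ℝ) :
    Integrable (fun ω => f (X ω)) μ ∧
      ∫ ω, f (X ω) ∂μ = a * f x1 + b * f x2 + (1 - a - b) * f 0 := by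
  set A : Set Ω := X ⁻¹' {x1} with hAdef
  set B : Set Ω := X ⁻¹' {x2} with hBdef
  set C : Set Ω := X ⁻¹' {0} with hCdef
  have hmA : MeasurableSet A := hX (measurableSet_singleton x1)
  have hmB : MeasurableSet B := hX (measurableSet_singleton x2)
  have hmC : MeasurableSet C := hX (measurableSet_singleton 0)
  have hABd : Disjoint A B := by
    apply Set.disjoint_left.mpr
    intro ω h1 h2
    exact h12 ((Set.mem_preimage.mp h1).symm.trans (Set.mem_preimage.mp h2))
  have hACd : Disjoint (A ∪ B) C := by
    apply Set.disjoint_left.mpr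
    intro ω h1 h2
    rcases h1 with h1 | h1
    · exact hx1 ((Set.mem_preimage.mp h1).symm.trans (Set.mem_preimage.mp h2))
    · exact hx2 ((Set.mem_preimage.mp h1).symm.trans (Set.mem_preimage.mp h2))
  have hμA : μ A = ENNReal.ofReal a := hA
  have hμB : μ B = ENNReal.ofReal b := hB
  have hμC : μ C = ENNReal.ofReal (1 - a - b) := hC
  have hunion : μ (A ∪ B ∪ C) = 1 := by
    rw [measure_union hACd hmC, measure_union hABd hmB, hμA, hμB, hμC,
      ← ENNReal.ofReal_add ha hb, ← ENNReal.ofReal_add (by linarith) (by linarith)]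
    norm_num
  have hae : ∀ᵐ ω ∂μ, ω ∈ A ∪ B ∪ C := by
    have hcompl : μ (A ∪ B ∪ C)ᶜ = 0 := by
      rw [measure_compl ((hmA.union hmB).union hmC) (measure_ne_top _ _), hunion,
        measure_univ, tsub_self]
    exact (MeasureTheory.measure_eq_zero_iff_ae_notMem.mp hcompl).mono fun ω h => by
      by_contra h'; exact h h'
  set g : Ω → ℝ := fun ω =>
    A.indicator (fun _ => f x1) ω + B.indicator (fun _ => f x2) ω
      + C.indicator (fun _ => f 0) ω with hgdef
  have hgeq : (fun ω => f (X ω)) =ᵐ[μ] g := by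
    filter_upwards [hae] with ω hω
    rcases hω with (hω | hω) | hω
    · have h1 : X ω = x1 := hω
      have h2 : ω ∉ B := fun hc => h12 (h1.symm.trans hc)
      have h3 : ω ∉ C := fun hc => hx1 (h1.symm.trans hc)
      simp [hgdef, Set.indicator_of_mem hω, Set.indicator_of_notMem h2,
        Set.indicator_of_notMem h3, h1]
    · have h1 : X ω = x2 := hω
      have h2 : ω ∉ A := fun hc => h12 ((hc : X ω = x1).symm.trans h1)
      have h3 : ω ∉ C := fun hc => hx2 (h1.symm.trans hc)
      simp [hgdef, Set.indicator_of_mem hω, Set.indicator_of_notMem h2,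
        Set.indicator_of_notMem h3, h1]
    · have h1 : X ω = 0 := hω
      have h2 : ω ∉ A := fun hc => hx1 ((hc : X ω = x1).symm.trans h1).symm.symm
      have h3 : ω ∉ B := fun hc => hx2 ((hc : X ω = x2).symm.trans h1).symm.symm
      simp [hgdef, Set.indicator_of_mem hω, Set.indicator_of_notMem h2,
        Set.indicator_of_notMem h3, h1]
  have hgint : Integrable g μ :=
    (((integrable_const (f x1)).indicator hmA).add
      ((integrable_const (f x2)).indicator hmB)).add
      ((integrable_const (f 0)).indicator hmC)
  have hint : Integrable (fun ω => f (X ω)) μ := hgint.congr hgeq.symm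
  refine ⟨hint, ?_⟩
  rw [integral_congr_ae hgeq, hgdef]
  have i1 : Integrable (fun ω => A.indicator (fun _ => f x1) ω) μ :=
    (integrable_const (f x1)).indicator hmA
  have i2 : Integrable (fun ω => B.indicator (fun _ => f x2) ω) μ :=
    (integrable_const (f x2)).indicator hmB
  have i3 : Integrable (fun ω => C.indicator (fun _ => f 0) ω) μ :=
    (integrable_const (f 0)).indicator hmC
  have i12 : Integrable (fun ω => A.indicator (fun _ => f x1) ω
      + B.indicator (fun _ => f x2) ω) μ := i1.add i2
  beta_reduce
  rw [integral_add i12 i3, integral_add i1 i2]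
  rw [integral_indicator_const _ hmA, integral_indicator_const _ hmB,
    integral_indicator_const _ hmC, measureReal_def, measureReal_def,
    measureReal_def, hμA, hμB, hμC,
    ENNReal.toReal_ofReal ha, ENNReal.toReal_ofReal hb,
    ENNReal.toReal_ofReal (by linarith)]
  simp [mul_comm]

/-- (Overwhelming majority implies no surprise.)  Two-candidate
model, voter `v ∈ P₂`.  If `(p₂₂/p₂₁)·((1/2-ε)/(1/2+ε)) < 1` and the estimates
are regular, `p̂₂₂ ≥ p̂₂₁`, then there is `N` such that for all `n ≥ N`,
`P(Z > 0) ≤ exp(-2 (p̂₂₂ p̂₂₁/(p̂₂₂+p̂₂₁))² √n)`. -/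
theorem surprise_two_candidates_overwhelming_majority
    {Ω : Type*} [MeasurableSpace Ω] (μ : Measure Ω) [IsProbabilityMeasure μ]
    (ε : ℝ) (hε : 0 < ε) (hε' : ε < 1/2)
    (p22 p21 phat22 phat21 : ℝ)
    (hp22 : 0 < p22) (hp22' : p22 ≤ 1) (hp21 : 0 < p21) (hp21' : p21 ≤ 1)
    (hphat22 : 0 < phat22) (hphat22' : phat22 ≤ 1)
    (hphat21 : 0 < phat21) (hphat21' : phat21 ≤ 1)
    (Y : ℕ → Ω → ℝ) (hmeas : ∀ i, Measurable (Y i))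
    (hindep : iIndepFun Y μ)
    (hY1 : ∀ i, μ {ω | Y i ω = 1/phat22} = ENNReal.ofReal ((1/2 - ε) * p22))
    (hY2 : ∀ i, μ {ω | Y i ω = -1/phat21} = ENNReal.ofReal ((1/2 + ε) * p21))
    (hY0 : ∀ i, μ {ω | Y i ω = 0} =
      ENNReal.ofReal (1 - (1/2 - ε) * p22 - (1/2 + ε) * p21))
    (hmargin : (p22 / p21) * ((1/2 - ε) / (1/2 + ε)) < 1)
    (hregular : phat22 ≥ phat21) :
    ∃ N : ℕ, ∀ n : ℕ, N ≤ n →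
      μ {ω | 0 < 1 + ∑ i ∈ Finset.range (n - 1), Y i ω} ≤
        ENNReal.ofReal
          (Real.exp (-2 * (phat22 * phat21 / (phat22 + phat21))^2 * Real.sqrt n)) := by
  classical
  have hε2 : 0 < 1/2 - ε := by linarith
  have hε3 : 0 < 1/2 + ε := by linarith
  set a : ℝ := (1/2 - ε) * p22 with hadef
  set b : ℝ := (1/2 + ε) * p21 with hbdef
  set x1 : ℝ := 1/phat22 with hx1def
  set x2 : ℝ := -1/phat21 with hx2def
  have ha : 0 < a := mul_pos hε2 hp22
  have hb : 0 < b := mul_pos hε3 hp21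
  have hab : a + b ≤ 1 := by
    have h1 : a ≤ 1/2 - ε := by nlinarith
    have h2 : b ≤ 1/2 + ε := by nlinarith
    linarith
  have hx1pos : 0 < x1 := by rw [hx1def]; positivity
  have hx2neg : x2 < 0 := by
    rw [hx2def]
    have : (0:ℝ) < 1/phat21 := by positivity
    linarith [neg_div phat21 (1:ℝ)]
  have hx1ne : x1 ≠ 0 := ne_of_gt hx1pos
  have hx2ne : x2 ≠ 0 := ne_of_lt hx2neg
  have h12 : x1 ≠ x2 := ne_of_gt (lt_trans hx2neg hx1pos)
  have haltb : a < b := by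
    rw [div_mul_div_comm, div_lt_one (by positivity)] at hmargin
    nlinarith [hmargin]
  have key : ∀ (t : ℝ) (i : ℕ), Integrable (fun ω => Real.exp (t * Y i ω)) μ ∧
      ∫ ω, Real.exp (t * Y i ω) ∂μ
        = a * Real.exp (t * x1) + b * Real.exp (t * x2) + (1 - a - b) := by
    intro t i
    have h := three_point_integral μ (Y i) (hmeas i) x1 x2 hx1ne hx2ne h12 a b
      ha.le hb.le hab (hY1 i) (hY2 i) (hY0 i) (fun x => Real.exp (t * x))
    refine ⟨h.1, ?_⟩
    rw [h.2]
    simp [Real.exp_zero]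
  set g : ℝ → ℝ :=
    fun t => a * Real.exp (t * x1) + b * Real.exp (t * x2) + (1 - a - b) with hgdef
  have hderiv : HasDerivAt g (a * x1 + b * x2) 0 := by
    have h1 : HasDerivAt (fun t : ℝ => Real.exp (t * x1)) x1 0 := by
      have := ((hasDerivAt_id (0:ℝ)).mul_const x1).exp
      simpa using this
    have h2 : HasDerivAt (fun t : ℝ => Real.exp (t * x2)) x2 0 := by
      have := ((hasDerivAt_id (0:ℝ)).mul_const x2).exp
      simpa using this
    have h3 := ((h1.const_mul a).add (h2.const_mul b)).add_const (1 - a - b)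
    simpa [hgdef] using h3
  have hd_neg : a * x1 + b * x2 < 0 := by
    have hkey : a * phat21 < b * phat22 := by nlinarith
    have h1 : a * x1 = a / phat22 := by rw [hx1def]; ring
    have h2 : b * x2 = -(b / phat21) := by rw [hx2def]; ring
    have h3 : a / phat22 < b / phat21 := (div_lt_div_iff₀ hphat22 hphat21).mpr hkey
    rw [h1, h2]; linarith
  have hg0 : g 0 = 1 := by
    simp only [hgdef]
    rw [zero_mul, zero_mul, Real.exp_zero]
    ring
  have hslope := hasDerivAt_iff_tendsto_slope.mp hderiv
  have hslope' : Filter.Tendsto (slope g 0) (nhdsWithin 0 (Set.Ioi 0))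
      (nhds (a * x1 + b * x2)) := by
    refine hslope.mono_left (nhdsWithin_mono 0 ?_)
    intro x hx
    exact Set.mem_compl_singleton_iff.mpr (ne_of_gt hx)
  have hev : ∀ᶠ t in nhdsWithin 0 (Set.Ioi 0), slope g 0 t < 0 :=
    hslope'.eventually_lt_const hd_neg
  obtain ⟨t0, hslope_t0, ht0mem⟩ :=
    (hev.and (eventually_mem_nhdsWithin (s := Set.Ioi (0:ℝ)) (a := (0:ℝ)))).exists
  have ht0pos : 0 < t0 := ht0mem
  have hq1 : g t0 < 1 := by
    rw [slope_def_field, sub_zero] at hslope_t0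
    have hdiff : g t0 - g 0 < 0 := by
      by_contra h
      push_neg at h
      exact absurd (div_nonneg h ht0pos.le) (not_le.mpr hslope_t0)
    rw [hg0] at hdiff; linarith
  have hqpos : 0 < g t0 := by
    have h1 : 0 < a * Real.exp (t0 * x1) := by positivity
    have h2 : 0 < b * Real.exp (t0 * x2) := by positivity
    have h3 : (0:ℝ) ≤ 1 - a - b := by linarith
    rw [hgdef]; dsimp only; linarith
  set q : ℝ := g t0 with hqdef
  set r : ℝ := -Real.log q with hrdef
  have hrpos : 0 < r := by
    rw [hrdef]
    have := Real.log_neg hqpos hq1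
    linarith
  have hInt : ∀ i, Integrable (fun ω => Real.exp (t0 * Y i ω)) μ := fun i => (key t0 i).1
  have hmgf : ∀ i : ℕ, mgf (Y i) μ t0 = q := by
    intro i
    rw [hqdef, hgdef]
    exact (key t0 i).2
  set c : ℝ := phat22 * phat21 / (phat22 + phat21) with hcdef
  have hs : Filter.Tendsto (fun n : ℕ => Real.sqrt n) Filter.atTop Filter.atTop := by
    rw [Filter.tendsto_atTop_atTop]
    intro bb
    refine ⟨Nat.ceil ((max bb 0)^2), fun n hn => ?_⟩
    have h1 : (max bb 0)^2 ≤ (n:ℝ) := le_trans (Nat.le_ceil _) (Nat.cast_le.mpr hn)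
    calc bb ≤ max bb 0 := le_max_left _ _
      _ = Real.sqrt ((max bb 0)^2) := (Real.sqrt_sq (le_max_right _ _)).symm
      _ ≤ Real.sqrt n := Real.sqrt_le_sqrt h1
  have hF : Filter.Tendsto
      (fun n : ℕ => ((n:ℝ) - 1) * r - (t0 + 2 * c^2 * Real.sqrt n))
      Filter.atTop Filter.atTop := by
    have h2 : Filter.Tendsto (fun n : ℕ => Real.sqrt n * r - 2 * c^2)
        Filter.atTop Filter.atTop := by
      have ha1 := hs.atTop_mul_const hrpos
      have ha2 := Filter.tendsto_atTop_add_const_right Filter.atTop (-(2 * c^2)) ha1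
      exact ha2.congr (fun n => by ring)
    have h3 := hs.atTop_mul_atTop₀ h2
    have h4 := Filter.tendsto_atTop_add_const_right Filter.atTop (-(r + t0)) h3
    refine h4.congr (fun n => ?_)
    have hss : Real.sqrt n * Real.sqrt n = (n:ℝ) := Real.mul_self_sqrt (Nat.cast_nonneg n)
    linear_combination r * hss
  obtain ⟨N0, hN0⟩ := Filter.eventually_atTop.mp (hF.eventually_ge_atTop 0)
  refine ⟨max N0 1, fun n hn => ?_⟩
  have hn1 : 1 ≤ n := le_trans (le_max_right _ _) hn
  have hnN0 : N0 ≤ n := le_trans (le_max_left _ _) hn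
  set m : ℕ := n - 1 with hmdef
  have hmcast : ((m:ℕ):ℝ) = (n:ℝ) - 1 := by
    rw [hmdef, Nat.cast_sub hn1, Nat.cast_one]
  have hint_sum : Integrable (fun ω => Real.exp (t0 * ∑ i ∈ Finset.range m, Y i ω)) μ := by
    have h := hindep.integrable_exp_mul_sum (t := t0) hmeas
      (s := Finset.range m) (fun i _ => hInt i)
    simpa [Finset.sum_apply] using h
  have hsubset : {ω | 0 < 1 + ∑ i ∈ Finset.range m, Y i ω}
      ⊆ {ω | -1 ≤ (fun ω => ∑ i ∈ Finset.range m, Y i ω) ω} := by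
    intro ω hω
    simp only [Set.mem_setOf_eq] at hω ⊢
    linarith
  have hmarkov := measure_ge_le_exp_mul_mgf (μ := μ)
    (X := fun ω => ∑ i ∈ Finset.range m, Y i ω) (-1) ht0pos.le hint_sum
  have hmgfsum : mgf (fun ω => ∑ i ∈ Finset.range m, Y i ω) μ t0 = q ^ m := by
    have h1 : (fun ω => ∑ i ∈ Finset.range m, Y i ω) = ∑ i ∈ Finset.range m, Y i := by
      funext ω; simp [Finset.sum_apply]
    rw [h1, hindep.mgf_sum hmeas]
    simp [hmgf]
  have hqm : Real.exp (-t0 * (-1)) * q ^ m = Real.exp (t0 + (m:ℝ) * Real.log q) := by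
    have e0 : -t0 * (-1:ℝ) = t0 := by ring
    rw [Real.exp_add, Real.exp_nat_mul, Real.exp_log hqpos, e0]
  have hexp_le : Real.exp (t0 + (m:ℝ) * Real.log q)
      ≤ Real.exp (-2 * c^2 * Real.sqrt n) := by
    apply Real.exp_le_exp.mpr
    have h0 := hN0 n hnN0
    have hlog : Real.log q = -r := by rw [hrdef]; ring
    rw [hlog, hmcast]
    have e1 : ((n:ℝ)-1) * (-r) = -(((n:ℝ)-1)*r) := by ring
    rw [e1]
    linarith
  calc μ {ω | 0 < 1 + ∑ i ∈ Finset.range m, Y i ω}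
      ≤ μ {ω | -1 ≤ (fun ω => ∑ i ∈ Finset.range m, Y i ω) ω} := measure_mono hsubset
    _ ≤ ENNReal.ofReal (Real.exp (-2 * c^2 * Real.sqrt n)) := by
        rw [ENNReal.le_ofReal_iff_toReal_le (measure_ne_top _ _) (Real.exp_nonneg _)]
        calc (μ {ω | -1 ≤ (fun ω => ∑ i ∈ Finset.range m, Y i ω) ω}).toReal
            ≤ Real.exp (-t0 * (-1))
              * mgf (fun ω => ∑ i ∈ Finset.range m, Y i ω) μ t0 := hmarkov
          _ = Real.exp (t0 + (m:ℝ) * Real.log q) := by rw [hmgfsum]; exact hqm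
          _ ≤ Real.exp (-2 * c^2 * Real.sqrt n) := hexp_le
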